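/- arXiv:0802.4130 — 2 statements merged into one kernel-verified Lean document; each statement's English description precedes it below -/
import Mathlib

section
/- Let Q denote the Gaussian tail function Q(x) = ∫_x^∞ (1/√(2π)) e^{-t²/2} dt. For constants M > 0, σ > 0 and g ≥ 0, the detection probability P_d(γ) = Q((γ - M(σ² + g))/(σ √(2M(σ² + 2g)))) is a concave function of γ on the set {γ : γ ≤ M(σ² + g)}. -/
/-- The Gaussian tail function `Q(x) = ∫_x^∞ (1/√(2π)) e^{-t²/2} dt`. -/
noncomputable def gaussQ (x : ℝ) : ℝ :=
  ∫ t in Set.Ioi x, (Real.sqrt (2 * Real.pi))⁻¹ * Real.exp (-t ^ 2 / 2)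

noncomputable def gaussPhi (t : ℝ) : ℝ :=
  (Real.sqrt (2 * Real.pi))⁻¹ * Real.exp (-t ^ 2 / 2)

lemma gaussPhi_continuous : Continuous gaussPhi := by
  unfold gaussPhi; fun_prop

lemma gaussPhi_integrable : MeasureTheory.Integrable gaussPhi := by
  have h : MeasureTheory.Integrable (fun t : ℝ => Real.exp (-(1/2 : ℝ) * t ^ 2)) :=
    integrable_exp_neg_mul_sq (by norm_num)
  have := h.const_mul (Real.sqrt (2 * Real.pi))⁻¹
  convert this using 2 with t
  unfold gaussPhi
  ring_nf

lemma gaussQ_sub (x y : ℝ) (hxy : x ≤ y) :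
    gaussQ x = (∫ t in Set.Ioc x y, gaussPhi t) + gaussQ y := by
  unfold gaussQ
  show (∫ t in Set.Ioi x, gaussPhi t) = (∫ t in Set.Ioc x y, gaussPhi t) + ∫ t in Set.Ioi y, gaussPhi t
  rw [show Set.Ioi x = Set.Ioc x y ∪ Set.Ioi y from (Set.Ioc_union_Ioi_eq_Ioi hxy).symm,
    MeasureTheory.setIntegral_union (Set.Ioc_disjoint_Ioi le_rfl) measurableSet_Ioi
      gaussPhi_integrable.integrableOn gaussPhi_integrable.integrableOn]

lemma gaussQ_eq (x : ℝ) : gaussQ x = gaussQ 0 - ∫ t in (0:ℝ)..x, gaussPhi t := by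
  rcases le_total 0 x with h | h
  · rw [intervalIntegral.integral_of_le h, gaussQ_sub 0 x h]; ring
  · rw [intervalIntegral.integral_of_ge h, gaussQ_sub x 0 h]; ring

lemma gaussQ_hasDerivAt (x : ℝ) : HasDerivAt gaussQ (-(gaussPhi x)) x := by
  have h : HasDerivAt (fun y => ∫ t in (0:ℝ)..y, gaussPhi t) (gaussPhi x) x :=
    intervalIntegral.integral_hasDerivAt_right
      (gaussPhi_continuous.intervalIntegrable 0 x)
      (gaussPhi_continuous.stronglyMeasurableAtFilter _ _)
      gaussPhi_continuous.continuousAt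
  have h2 := (hasDerivAt_const x (gaussQ 0)).sub h
  simp only [zero_sub] at h2
  have : gaussQ = fun y => gaussQ 0 - ∫ t in (0:ℝ)..y, gaussPhi t :=
    funext gaussQ_eq
  rw [this]
  exact h2

/-- the detection probability
`P_d(γ) = Q((γ - M(σ²+g))/(σ√(2M(σ²+2g))))` is concave on `{γ : γ ≤ M(σ²+g)}`. -/
theorem Pd_concaveOn (M σ g : ℝ) (hM : 0 < M) (hσ : 0 < σ) (hg : 0 ≤ g) :
    ConcaveOn ℝ {γ : ℝ | γ ≤ M * (σ ^ 2 + g)}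
      (fun γ : ℝ =>
        gaussQ ((γ - M * (σ ^ 2 + g)) / (σ * Real.sqrt (2 * M * (σ ^ 2 + 2 * g))))) := by
  set c := M * (σ ^ 2 + g) with hc
  set s := σ * Real.sqrt (2 * M * (σ ^ 2 + 2 * g)) with hs
  have hspos : 0 < s := by
    apply mul_pos hσ
    apply Real.sqrt_pos.2
    have : 0 < σ ^ 2 + 2 * g := by positivity
    positivity
  have hD : {γ : ℝ | γ ≤ c} = Set.Iic c := rfl
  have hderiv : ∀ γ : ℝ, HasDerivAt (fun γ : ℝ => gaussQ ((γ - c) / s))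
      (-(gaussPhi ((γ - c) / s)) / s) γ := by
    intro γ
    have h1 : HasDerivAt (fun γ : ℝ => (γ - c) / s) (1 / s) γ := by
      simpa using ((hasDerivAt_id γ).sub_const c).div_const s
    have := (gaussQ_hasDerivAt ((γ - c) / s)).comp γ h1
    simpa [Function.comp_def, neg_div, div_eq_mul_inv] using this
  rw [hD]
  apply AntitoneOn.concaveOn_of_deriv (convex_Iic c)
  · exact fun γ _ => (hderiv γ).continuousAt.continuousWithinAt
  · exact fun γ _ => (hderiv γ).differentiableAt.differentiableWithinAt
  · intro γ₁ hγ₁ γ₂ hγ₂ hle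
    rw [(hderiv γ₁).deriv, (hderiv γ₂).deriv]
    rw [interior_Iic] at hγ₁ hγ₂
    set x1 := (γ₁ - c) / s
    set x2 := (γ₂ - c) / s
    have hx12 : x1 ≤ x2 := div_le_div_of_nonneg_right (by linarith) hspos.le
    have hx2 : x2 < 0 := div_neg_of_neg_of_pos (by linarith [hγ₂.out]) hspos
    have hsq : x2 ^ 2 ≤ x1 ^ 2 := by nlinarith
    have hphi : gaussPhi x1 ≤ gaussPhi x2 := by
      unfold gaussPhi
      have h2π : (0:ℝ) ≤ (Real.sqrt (2 * Real.pi))⁻¹ := by positivity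
      exact mul_le_mul_of_nonneg_left (Real.exp_le_exp.2 (by linarith)) h2π
    have := div_le_div_of_nonneg_right (neg_le_neg hphi) hspos.le
    linarith [this]
end

section
/- Let Q denote the Gaussian tail function Q(x) = ∫_x^∞ (1/√(2π)) e^{-t²/2} dt. Fix K ∈ ℕ, M > 0, σ > 0, and for each k = 0, …, K−1 let g_k ≥ 0, c_k ≥ 0, and let P_m^{(k)}(γ) = 1 - Q((γ - M(σ² + g_k))/(σ √(2M(σ² + 2g_k)))). Let J ∈ ℕ and for each j = 0, …, J−1 let S_j ⊆ {0, …, K−1} and ε_j ≥ 0. Suppose bounds γ_min,k and γ_max,k satisfy M σ² ≤ γ_min,k ≤ γ_max,k ≤ M(σ² + g_k) for every k. Then the feasible set {γ ∈ ℝ^K : Σ_{i ∈ S_j} c_i P_m^{(i)}(γ_i) ≤ ε_j for all j, and γ_min,k ≤ γ_k ≤ γ_max,k for all k} is a convex subset of ℝ^K. -/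
open MeasureTheory Set

namespace P2Aux

/-- The standard Gaussian density. -/
noncomputable def gphi (t : ℝ) : ℝ := (Real.sqrt (2 * Real.pi))⁻¹ * Real.exp (-t ^ 2 / 2)

lemma gphi_continuous : Continuous gphi := by
  unfold gphi; fun_prop

lemma gphi_integrable : Integrable gphi := by
  have h : Integrable (fun t : ℝ => Real.exp (-(1/2 : ℝ) * t ^ 2)) :=
    integrable_exp_neg_mul_sq (by norm_num)
  have h2 := h.const_mul ((Real.sqrt (2 * Real.pi))⁻¹)
  refine h2.congr ?_
  filter_upwards with t
  unfold gphi
  ring_nf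

lemma gaussQ_eq (x : ℝ) : gaussQ x = gaussQ 0 - ∫ t in (0:ℝ)..x, gphi t := by
  have hI := gphi_integrable
  have h1 : ∀ a : ℝ, gaussQ a = (∫ t, gphi t) - ∫ t in Iic a, gphi t := by
    intro a
    have := intervalIntegral.integral_Iic_add_Ioi (b := a) hI.integrableOn hI.integrableOn
    have hQ : gaussQ a = ∫ t in Ioi a, gphi t := rfl
    rw [hQ]; linarith
  rw [h1 x, h1 0, ← intervalIntegral.integral_Iic_sub_Iic hI.integrableOn hI.integrableOn]
  ring

lemma gaussQ_hasDerivAt (x : ℝ) : HasDerivAt gaussQ (-(gphi x)) x := by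
  have hF : HasDerivAt (fun u : ℝ => gaussQ 0 - ∫ t in (0:ℝ)..u, gphi t) (-(gphi x)) x := by
    have h := intervalIntegral.integral_hasDerivAt_right (a := (0:ℝ)) (b := x)
      (gphi_integrable.intervalIntegrable)
      (gphi_continuous.stronglyMeasurable.stronglyMeasurableAtFilter)
      gphi_continuous.continuousAt
    exact ((hasDerivAt_const x (gaussQ 0)).sub h).congr_deriv (zero_sub _)
  have : gaussQ = fun u : ℝ => gaussQ 0 - ∫ t in (0:ℝ)..u, gphi t := funext gaussQ_eq
  rw [this]; exact hF

lemma Pm_hasDerivAt (x : ℝ) : HasDerivAt (fun u => 1 - gaussQ u) (gphi x) x := by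
  exact ((hasDerivAt_const x (1:ℝ)).sub (gaussQ_hasDerivAt x)).congr_deriv (by ring)

lemma Pm_convexOn : ConvexOn ℝ (Iic (0:ℝ)) (fun u => 1 - gaussQ u) := by
  refine MonotoneOn.convexOn_of_deriv (convex_Iic 0) ?_ ?_ ?_
  · exact fun u _ => (Pm_hasDerivAt u).continuousAt.continuousWithinAt
  · exact fun u _ => (Pm_hasDerivAt u).differentiableAt.differentiableWithinAt
  · have hderiv : deriv (fun u => 1 - gaussQ u) = gphi := by
      funext u; exact (Pm_hasDerivAt u).deriv
    rw [hderiv, interior_Iic]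
    intro u hu v hv huv
    unfold gphi
    have h1 : (0:ℝ) ≤ (Real.sqrt (2 * Real.pi))⁻¹ := by positivity
    refine mul_le_mul_of_nonneg_left (Real.exp_le_exp.2 ?_) h1
    have hu0 : u < 0 := hu
    have hv0 : v < 0 := hv
    nlinarith

end P2Aux

/-- the feasible set of problem (P2)
`{γ ∈ ℝ^K : Σ_{i ∈ S_j} c_i P_m^{(i)}(γ_i) ≤ ε_j ∀j, γ_min,k ≤ γ_k ≤ γ_max,k ∀k}`
is convex whenever `Mσ² ≤ γ_min,k ≤ γ_max,k ≤ M(σ² + g_k)` for every `k`. -/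
theorem P2_feasible_set_convex (K J : ℕ) (M σ : ℝ) (hM : 0 < M) (hσ : 0 < σ)
    (g c : Fin K → ℝ) (hg : ∀ k, 0 ≤ g k) (hc : ∀ k, 0 ≤ c k)
    (S : Fin J → Finset (Fin K)) (ε : Fin J → ℝ) (hε : ∀ j, 0 ≤ ε j)
    (γmin γmax : Fin K → ℝ)
    (hbounds : ∀ k, M * σ ^ 2 ≤ γmin k ∧ γmin k ≤ γmax k ∧
      γmax k ≤ M * (σ ^ 2 + g k)) :
    Convex ℝ
      {γ : Fin K → ℝ |
        (∀ j : Fin J,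
          ∑ i ∈ S j,
            c i * (1 - gaussQ ((γ i - M * (σ ^ 2 + g i)) /
              (σ * Real.sqrt (2 * M * (σ ^ 2 + 2 * g i))))) ≤ ε j) ∧
        (∀ k : Fin K, γmin k ≤ γ k ∧ γ k ≤ γmax k)} := by
  intro x hx y hy a b ha hb hab
  obtain ⟨hx1, hx2⟩ := hx
  obtain ⟨hy1, hy2⟩ := hy
  have hcomb : ∀ k, (a • x + b • y) k = a * x k + b * y k := fun k => rfl
  have hbox : ∀ k : Fin K, γmin k ≤ (a • x + b • y) k ∧ (a • x + b • y) k ≤ γmax k := by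
    intro k
    rw [hcomb k]
    obtain ⟨h1x, h2x⟩ := hx2 k
    obtain ⟨h1y, h2y⟩ := hy2 k
    have e1 : a * γmin k ≤ a * x k := mul_le_mul_of_nonneg_left h1x ha
    have e2 : b * γmin k ≤ b * y k := mul_le_mul_of_nonneg_left h1y hb
    have e3 : a * x k ≤ a * γmax k := mul_le_mul_of_nonneg_left h2x ha
    have e4 : b * y k ≤ b * γmax k := mul_le_mul_of_nonneg_left h2y hb
    have emin : γmin k = a * γmin k + b * γmin k := by linear_combination (-γmin k) * hab
    have emax : γmax k = a * γmax k + b * γmax k := by linear_combination (-γmax k) * hab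
    constructor
    · linarith
    · linarith
  refine ⟨?_, hbox⟩
  intro j
  -- notation
  set B : Fin K → ℝ := fun i => M * (σ ^ 2 + g i) with hB
  set d : Fin K → ℝ := fun i => σ * Real.sqrt (2 * M * (σ ^ 2 + 2 * g i)) with hd
  have hdpos : ∀ i, 0 < d i := by
    intro i
    have hpos : 0 < σ ^ 2 + 2 * g i := by nlinarith [hg i, pow_pos hσ 2]
    have : 0 < 2 * M * (σ ^ 2 + 2 * g i) := by nlinarith [mul_pos hM hpos]
    exact mul_pos hσ (Real.sqrt_pos.2 this)
  have harg_nonpos : ∀ (γ : Fin K → ℝ), (∀ k, γ k ≤ γmax k) → ∀ i,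
      (γ i - B i) / d i ≤ 0 := by
    intro γ hγ i
    apply div_nonpos_of_nonpos_of_nonneg _ (hdpos i).le
    have := (hbounds i).2.2
    have := hγ i
    simp only [hB]
    linarith
  have hxmax : ∀ k, x k ≤ γmax k := fun k => (hx2 k).2
  have hymax : ∀ k, y k ≤ γmax k := fun k => (hy2 k).2
  have key : ∀ i : Fin K,
      c i * (1 - gaussQ (((a • x + b • y) i - B i) / d i)) ≤
        a * (c i * (1 - gaussQ ((x i - B i) / d i))) +
        b * (c i * (1 - gaussQ ((y i - B i) / d i))) := by
    intro i
    have hu : (x i - B i) / d i ∈ Iic (0:ℝ) := harg_nonpos x hxmax i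
    have hv : (y i - B i) / d i ∈ Iic (0:ℝ) := harg_nonpos y hymax i
    have hargs : ((a • x + b • y) i - B i) / d i =
        a * ((x i - B i) / d i) + b * ((y i - B i) / d i) := by
      rw [hcomb i]
      have hnum : a * x i + b * y i - B i = a * (x i - B i) + b * (y i - B i) := by
        linear_combination (B i) * hab
      rw [hnum]; ring
    have hconv := P2Aux.Pm_convexOn.2 hu hv ha hb hab
    simp only [smul_eq_mul] at hconv
    rw [hargs]
    calc c i * (1 - gaussQ (a * ((x i - B i) / d i) + b * ((y i - B i) / d i)))
        ≤ c i * (a * (1 - gaussQ ((x i - B i) / d i)) +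
            b * (1 - gaussQ ((y i - B i) / d i))) :=
          mul_le_mul_of_nonneg_left hconv (hc i)
      _ = a * (c i * (1 - gaussQ ((x i - B i) / d i))) +
            b * (c i * (1 - gaussQ ((y i - B i) / d i))) := by ring
  calc ∑ i ∈ S j, c i * (1 - gaussQ (((a • x + b • y) i - B i) / d i))
      ≤ ∑ i ∈ S j, (a * (c i * (1 - gaussQ ((x i - B i) / d i))) +
          b * (c i * (1 - gaussQ ((y i - B i) / d i)))) :=
        Finset.sum_le_sum fun i _ => key i
    _ = a * (∑ i ∈ S j, c i * (1 - gaussQ ((x i - B i) / d i))) +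
          b * (∑ i ∈ S j, c i * (1 - gaussQ ((y i - B i) / d i))) := by
        rw [Finset.sum_add_distrib, Finset.mul_sum, Finset.mul_sum]
    _ ≤ a * ε j + b * ε j := by
        gcongr
        · exact hx1 j
        · exact hy1 j
    _ = ε j := by linear_combination (ε j) * hab
end
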